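/- For all natural numbers n, m and every real number x: B_{s,q}[n+m; x] = Σ_{r=0}^{n} Σ_{j=0}^{m} S_{s,q}[m,j] · q^{r(j(1−s)+sm)} · binom(n,r)_{q^s} · B_{s,q}[r; x] · x^j · Π_{i=0}^{n−r−1} [j(1−s) + sm + s·i]_q. (Generalized Spivey formula for Bell polynomials.) -/
import Mathlib

/-- The `q`-bracket `[t]_q = (q^t - 1)/(q - 1)` (real exponentiation). -/
noncomputable def qBracket (q t : ℝ) : ℝ := (q ^ t - 1) / (q - 1)

open Classical in
/-- The `Q`-binomial coefficient: the sum of `Q^(t₁+⋯+t_{n-k})` over all weakly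
increasing integer tuples `0 ≤ t₁ ≤ ⋯ ≤ t_{n-k} ≤ k` when `k ≤ n`, and `0` when `k > n`. -/
noncomputable def qBinom (Q : ℝ) (n k : ℕ) : ℝ :=
  if k ≤ n then
    ∑ f ∈ Finset.univ.filter (fun f : Fin (n - k) → Fin (k + 1) => Monotone f),
      Q ^ (∑ i, (f i : ℕ))
  else 0

/-- The generalized `q`-Stirling numbers `S_{s,q}[n,k]` of Goldman–Haglund type. -/
noncomputable def genStirling (s q : ℝ) : ℕ → ℕ → ℝ
  | 0, 0 => 1
  | 0, _ + 1 => 0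
  | _ + 1, 0 => 0
  | n + 1, k + 1 =>
    if k + 1 ≤ n + 1 then
      q ^ (s * (n : ℝ) - (s - 1) * (k : ℝ)) * genStirling s q n k
        + qBracket q (s * (n : ℝ) - (s - 1) * ((k : ℝ) + 1)) * genStirling s q n (k + 1)
    else 0

/-- The generalized Bell polynomial `B_{s,q}[n;x]`. -/
noncomputable def genBellPoly (s q : ℝ) (n : ℕ) (x : ℝ) : ℝ :=
  ∑ k ∈ Finset.range (n + 1), genStirling s q n k * x ^ k

/-! ### Auxiliary material -/

/-- Sum of `Q^(Σ f)` over monotone `f : Fin a → Fin (b+1)`. -/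
noncomputable def Pfun (Q : ℝ) (a b : ℕ) : ℝ :=
  ∑ f ∈ Finset.univ.filter (fun f : Fin a → Fin (b+1) => Monotone f), Q ^ (∑ i, (f i : ℕ))

lemma qBinom_eq (Q : ℝ) {n k : ℕ} (h : k ≤ n) : qBinom Q n k = Pfun Q (n-k) k := by
  simp [qBinom, Pfun, h]

lemma Pfun_zero_left (Q : ℝ) (b : ℕ) : Pfun Q 0 b = 1 := by
  simp [Pfun]
  rw [Finset.filter_true_of_mem, Finset.card_singleton]
  intro f _ i j _
  exact i.elim0

lemma Pfun_zero_right (Q : ℝ) (a : ℕ) : Pfun Q a 0 = 1 := by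
  simp [Pfun]
  rw [Finset.filter_true_of_mem, Finset.card_singleton]
  intro f hf
  simp at hf
  exact hf ▸ monotone_const

lemma Pfun_succ (Q : ℝ) (a b : ℕ) :
    Pfun Q (a+1) (b+1) = Q^(a+1) * Pfun Q (a+1) b + Pfun Q a (b+1) := by
  classical
  unfold Pfun
  rw [← Finset.sum_filter_add_sum_filter_not
    (Finset.univ.filter (fun f : Fin (a+1) → Fin (b+2) => Monotone f)) (fun f => f 0 = 0)]
  rw [add_comm]
  congr 1
  · -- f 0 ≠ 0 part = Q^(a+1) * Pfun (a+1) b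
    rw [Finset.mul_sum]
    have hpos : ∀ (f : Fin (a+1) → Fin (b+2)), Monotone f → ¬ f 0 = 0 →
        ∀ k, (1 : ℕ) ≤ (f k : ℕ) := by
      intro f hm h0 k
      have h2 : (f 0 : ℕ) ≤ (f k : ℕ) := Fin.le_def.mp (hm (Fin.zero_le k))
      have h3 : (0 : ℕ) < (f 0 : ℕ) := Fin.pos_iff_ne_zero.mpr h0
      omega
    refine Finset.sum_bij' (fun f _ => fun k => (⟨(f k : ℕ) - 1, by omega⟩ : Fin (b+1)))
      (fun g _ => fun k => (g k).succ) ?_ ?_ ?_ ?_ ?_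
    · intro f hf
      simp only [Finset.mem_filter, Finset.mem_univ, true_and] at hf ⊢
      intro k l hkl
      simp only [Fin.mk_le_mk]
      exact Nat.sub_le_sub_right (hf.1 hkl) 1
    · intro g hg
      simp only [Finset.mem_filter, Finset.mem_univ, true_and] at hg ⊢
      constructor
      · intro k l hkl
        exact Fin.succ_le_succ_iff.mpr (hg hkl)
      · exact Fin.succ_ne_zero _
    · intro f hf
      simp only [Finset.mem_filter, Finset.mem_univ, true_and] at hf
      funext k
      have h1 := hpos f hf.1 hf.2 k
      apply Fin.ext
      simp only [Fin.val_succ]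
      omega
    · intro g hg
      funext k
      apply Fin.ext
      simp
    · intro f hf
      simp only [Finset.mem_filter, Finset.mem_univ, true_and] at hf
      have h1 := hpos f hf.1 hf.2
      rw [← pow_add]
      congr 1
      have : ∑ i, (f i : ℕ) = ∑ i : Fin (a+1), (((f i : ℕ) - 1) + 1) := by
        apply Finset.sum_congr rfl
        intro i _
        have := h1 i
        omega
      rw [this, Finset.sum_add_distrib]
      simp [add_comm]
  · -- f 0 = 0 part = Pfun a (b+1)
    refine Finset.sum_bij' (fun f _ => f ∘ Fin.succ) (fun h _ => Fin.cons 0 h) ?_ ?_ ?_ ?_ ?_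
    · intro f hf
      simp only [Finset.mem_filter, Finset.mem_univ, true_and] at hf ⊢
      intro k l hkl
      exact hf.1 (Fin.succ_le_succ_iff.mpr hkl)
    · intro h hh
      simp only [Finset.mem_filter, Finset.mem_univ, true_and] at hh ⊢
      refine ⟨?_, Fin.cons_zero _ _⟩
      intro k l hkl
      induction k using Fin.cases with
      | zero =>
        rw [Fin.cons_zero]
        exact Fin.zero_le _
      | succ k =>
        induction l using Fin.cases with
        | zero => exact absurd (Fin.le_zero_iff.mp hkl) (Fin.succ_ne_zero _)
        | succ l =>
          simp only [Fin.cons_succ]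
          exact hh (Fin.succ_le_succ_iff.mp hkl)
    · intro f hf
      simp only [Finset.mem_filter, Finset.mem_univ, true_and] at hf
      funext k
      induction k using Fin.cases with
      | zero => simp [hf.2.symm]
      | succ k => simp
    · intro h hh
      funext k
      simp
    · intro f hf
      simp only [Finset.mem_filter, Finset.mem_univ, true_and] at hf
      congr 1
      rw [Fin.sum_univ_succ]
      simp [hf.2]

lemma qBinom_zero (Q : ℝ) (n : ℕ) : qBinom Q n 0 = 1 := by
  rw [qBinom_eq Q (Nat.zero_le n), Pfun_zero_right]

lemma qBinom_of_gt (Q : ℝ) {n k : ℕ} (h : n < k) : qBinom Q n k = 0 := by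
  rw [qBinom, if_neg (by omega)]

lemma qBinom_pascal (Q : ℝ) {n r : ℕ} (hr : r ≤ n) :
    qBinom Q (n+1) (r+1) = Q^(n-r) * qBinom Q n r + qBinom Q n (r+1) := by
  rcases eq_or_lt_of_le hr with h | h
  · subst h
    rw [qBinom_eq Q (le_refl (r+1)), qBinom_eq Q (le_refl r),
      qBinom_of_gt Q (by omega)]
    simp only [Nat.sub_self, pow_zero, one_mul, add_zero]
    rw [Pfun_zero_left, Pfun_zero_left]
  · have h1 : n + 1 - (r+1) = (n - r - 1) + 1 := by omega
    have h2 : n - r = (n - r - 1) + 1 := by omega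
    have h3 : n - (r+1) = n - r - 1 := by omega
    rw [qBinom_eq Q (by omega), qBinom_eq Q (by omega), qBinom_eq Q (by omega),
      h1, h3, Pfun_succ, ← h2]

lemma genStirling_succ_zero (s q : ℝ) (n : ℕ) : genStirling s q (n+1) 0 = 0 := rfl

lemma genStirling_of_gt (s q : ℝ) {n k : ℕ} (h : n < k) : genStirling s q n k = 0 := by
  induction n generalizing k with
  | zero => match k, h with
    | k + 1, _ => rfl
  | succ n ih => match k, h with
    | k + 1, h => rw [genStirling, if_neg (by omega)]

lemma genStirling_succ_succ (s q : ℝ) (n k : ℕ) :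
    genStirling s q (n+1) (k+1) =
      q ^ (s * (n : ℝ) - (s - 1) * (k : ℝ)) * genStirling s q n k
        + qBracket q (s * (n : ℝ) - (s - 1) * ((k : ℝ) + 1)) * genStirling s q n (k + 1) := by
  by_cases h : k ≤ n
  · rw [genStirling, if_pos (by omega)]
  · rw [genStirling, if_neg (by omega), genStirling_of_gt s q (by omega),
      genStirling_of_gt s q (by omega)]
    ring

/-- The key recurrence of the generalized Bell polynomial. -/
lemma bell_rec (s q : ℝ) (hq : 0 < q) (N : ℕ) (x : ℝ) :
    genBellPoly s q (N+1) x =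
      q ^ (s * (N:ℝ)) * x * genBellPoly s q N (q ^ ((1:ℝ)-s) * x)
      + (q ^ (s * (N:ℝ)) * genBellPoly s q N (q ^ ((1:ℝ)-s) * x) - genBellPoly s q N x) / (q-1) := by
  have key : ∀ k : ℕ, (q ^ ((1:ℝ)-s) * x) ^ k = q ^ (((1:ℝ)-s) * (k:ℝ)) * x ^ k := by
    intro k
    rw [mul_pow, ← Real.rpow_natCast (q ^ ((1:ℝ)-s)) k, ← Real.rpow_mul hq.le]
  unfold genBellPoly
  rw [Finset.sum_range_succ']
  simp only [genStirling_succ_zero, zero_mul, add_zero, pow_zero, mul_one]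
  have expand : ∀ k ∈ Finset.range (N+1),
      genStirling s q (N+1) (k+1) * x ^ (k+1)
      = (q ^ (s * (N:ℝ)) * x) * (genStirling s q N k * (q ^ ((1:ℝ)-s) * x) ^ k)
        + qBracket q (s * (N:ℝ) - (s - 1) * ((k:ℝ) + 1)) * genStirling s q N (k+1) * x ^ (k+1) := by
    intro k hk
    rw [genStirling_succ_succ, add_mul, key k]
    congr 1
    have e1 : s * (N:ℝ) - (s-1) * (k:ℝ) = s * (N:ℝ) + (1-s) * (k:ℝ) := by ring
    rw [e1, Real.rpow_add hq]
    ring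
  rw [Finset.sum_congr rfl expand, Finset.sum_add_distrib, ← Finset.mul_sum]
  congr 1
  have shift : ∑ k ∈ Finset.range (N+1),
      qBracket q (s * (N:ℝ) - (s - 1) * ((k:ℝ) + 1)) * genStirling s q N (k+1) * x ^ (k+1)
      = ∑ k ∈ Finset.range (N+1),
      qBracket q (s * (N:ℝ) - (s - 1) * (k:ℝ)) * genStirling s q N k * x ^ k := by
    rw [Finset.sum_range_succ'
      (fun k => qBracket q (s * (N:ℝ) - (s - 1) * (k:ℝ)) * genStirling s q N k * x ^ k) N]
    rw [Finset.sum_range_succ]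
    rw [genStirling_of_gt s q (by omega)]
    have hz : qBracket q (s * (N:ℝ) - (s - 1) * ((0:ℕ):ℝ)) * genStirling s q N 0 * x ^ (0:ℕ) = 0 := by
      cases N with
      | zero =>
        have : s * ((0:ℕ):ℝ) - (s-1) * ((0:ℕ):ℝ) = 0 := by push_cast; ring
        rw [this]
        simp [qBracket]
      | succ N => rw [genStirling_succ_zero]; ring
    rw [hz]
    simp only [mul_zero, zero_mul, add_zero]
    apply Finset.sum_congr rfl
    intro k hk
    congr 2
    push_cast
    ring
  rw [shift]
  rw [Finset.mul_sum, ← Finset.sum_sub_distrib, Finset.sum_div]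
  apply Finset.sum_congr rfl
  intro k hk
  rw [key k, qBracket]
  have e1 : s * (N:ℝ) - (s-1) * (k:ℝ) = s * (N:ℝ) + (1-s) * (k:ℝ) := by ring
  rw [e1, Real.rpow_add hq]
  ring

/-- Generic summand of the Spivey formula. -/
noncomputable def Tgen (s q : ℝ) (m a b r j : ℕ) (x : ℝ) : ℝ :=
  genStirling s q m j * q ^ ((r : ℝ) * ((j : ℝ) * (1 - s) + s * (m : ℝ))) *
    qBinom (q ^ s) a r * genBellPoly s q r x * x ^ j *
    ∏ i ∈ Finset.range (b - r), qBracket q ((j : ℝ) * (1 - s) + s * (m : ℝ) + s * (i : ℝ))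

lemma perterm (q s x : ℝ) (hq : 0 < q) (hq1 : q ≠ 1) (m n r j : ℕ) (hr : r ≤ n) :
    q ^ (s * ((n + m : ℕ) : ℝ)) * x * Tgen s q m n n r j (q ^ ((1:ℝ) - s) * x)
      + (q ^ (s * ((n + m : ℕ) : ℝ)) * Tgen s q m n n r j (q ^ ((1:ℝ) - s) * x)
          - Tgen s q m n n r j x) / (q - 1)
    = genStirling s q m j * q ^ (((r+1 : ℕ) : ℝ) * ((j : ℝ) * (1 - s) + s * (m : ℝ))) *
        ((q ^ s) ^ (n - r) * qBinom (q ^ s) n r) * genBellPoly s q (r+1) x * x ^ j *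
        (∏ i ∈ Finset.range (n - r), qBracket q ((j : ℝ) * (1 - s) + s * (m : ℝ) + s * (i : ℝ)))
      + Tgen s q m n (n+1) r j x := by
  have hq1' : q - 1 ≠ 0 := sub_ne_zero.mpr hq1
  have hne : ∀ t : ℝ, q ^ t ≠ 0 := fun t => (Real.rpow_pos_of_pos hq t).ne'
  have hnr : ((n - r : ℕ) : ℝ) = (n : ℝ) - (r : ℝ) := by
    push_cast [Nat.cast_sub hr]; ring
  unfold Tgen
  rw [bell_rec s q hq r x]
  rw [show n + 1 - r = (n - r) + 1 by omega, Finset.prod_range_succ, hnr]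
  have hpow : (q ^ s) ^ (n - r) = q ^ (s * ((n:ℝ) - (r:ℝ))) := by
    rw [← Real.rpow_natCast (q ^ s) (n - r), ← Real.rpow_mul hq.le, hnr]
  rw [hpow]
  have hyj : (q ^ ((1:ℝ) - s) * x) ^ j = q ^ ((j : ℝ) * (1 - s)) * x ^ j := by
    rw [mul_pow, ← Real.rpow_natCast (q ^ ((1:ℝ)-s)) j, ← Real.rpow_mul hq.le,
      show ((1:ℝ)-s) * (j:ℝ) = (j:ℝ) * (1-s) by ring]
  rw [hyj]
  rw [show ((r+1:ℕ):ℝ) * ((j:ℝ)*(1-s) + s*(m:ℝ))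
      = (r:ℝ)*((j:ℝ)*(1-s)+s*(m:ℝ)) + ((j:ℝ)*(1-s)+s*(m:ℝ)) by push_cast; ring]
  rw [show s * ((n+m:ℕ):ℝ) = s*(n:ℝ) + s*(m:ℝ) by push_cast; ring]
  rw [show (j:ℝ)*(1-s) + s*(m:ℝ) + s*((n:ℝ)-(r:ℝ))
      = ((j:ℝ)*(1-s) + s*(m:ℝ) + s*(n:ℝ)) - s*(r:ℝ) by ring]
  rw [show s*((n:ℝ)-(r:ℝ)) = s*(n:ℝ) - s*(r:ℝ) by ring]
  simp only [qBracket]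
  rw [Real.rpow_add hq ((r:ℝ)*((j:ℝ)*(1-s)+s*(m:ℝ))) ((j:ℝ)*(1-s)+s*(m:ℝ)),
    Real.rpow_add hq (s*(n:ℝ)) (s*(m:ℝ)),
    Real.rpow_sub hq (s*(n:ℝ)) (s*(r:ℝ)),
    Real.rpow_sub hq ((j:ℝ)*(1-s) + s*(m:ℝ) + s*(n:ℝ)) (s*(r:ℝ)),
    Real.rpow_add hq ((j:ℝ)*(1-s) + s*(m:ℝ)) (s*(n:ℝ)),
    Real.rpow_add hq ((j:ℝ)*(1-s)) (s*(m:ℝ))]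
  field_simp
  ring

/-- Generalized Spivey formula for Bell polynomials. -/
theorem spivey_bell_poly (q s : ℝ) (hq : 0 < q) (hq1 : q ≠ 1) (n m : ℕ) (x : ℝ) :
    genBellPoly s q (n + m) x
    = ∑ r ∈ Finset.range (n + 1), ∑ j ∈ Finset.range (m + 1),
        genStirling s q m j * q ^ ((r : ℝ) * ((j : ℝ) * (1 - s) + s * (m : ℝ))) *
          qBinom (q ^ s) n r * genBellPoly s q r x * x ^ j *
          ∏ i ∈ Finset.range (n - r),
            qBracket q ((j : ℝ) * (1 - s) + s * (m : ℝ) + s * (i : ℝ)) := by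
  have main : ∀ (N : ℕ) (x : ℝ), genBellPoly s q (N + m) x
      = ∑ r ∈ Finset.range (N+1), ∑ j ∈ Finset.range (m+1), Tgen s q m N N r j x := by
    intro N
    induction N with
    | zero =>
      intro x
      rw [zero_add, Finset.sum_range_one]
      have h00 : qBinom ((q:ℝ)^s) 0 0 = 1 := qBinom_zero _ 0
      have hB0 : genBellPoly s q 0 x = 1 := by simp [genBellPoly, genStirling]
      simp only [Tgen, h00, hB0, Nat.cast_zero, zero_mul, Real.rpow_zero, Nat.sub_self,
        Finset.range_zero, Finset.prod_empty, mul_one, one_mul]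
      rfl
    | succ n ih =>
      intro x
      rw [show n + 1 + m = (n + m) + 1 by omega, bell_rec s q hq (n+m) x,
        ih (q ^ ((1:ℝ)-s) * x), ih x]
      -- transform the RHS
      have h1 : ∑ r ∈ Finset.range (n+1+1), ∑ j ∈ Finset.range (m+1), Tgen s q m (n+1) (n+1) r j x
          = (∑ r ∈ Finset.range (n+1), ∑ j ∈ Finset.range (m+1),
              (genStirling s q m j * q ^ (((r+1 : ℕ) : ℝ) * ((j : ℝ) * (1 - s) + s * (m : ℝ))) *
                ((q ^ s) ^ (n - r) * qBinom (q ^ s) n r) * genBellPoly s q (r+1) x * x ^ j *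
                (∏ i ∈ Finset.range (n - r),
                  qBracket q ((j : ℝ) * (1 - s) + s * (m : ℝ) + s * (i : ℝ)))
               + Tgen s q m n (n+1) (r+1) j x))
            + ∑ j ∈ Finset.range (m+1), Tgen s q m n (n+1) 0 j x := by
        rw [Finset.sum_range_succ'
          (fun r => ∑ j ∈ Finset.range (m+1), Tgen s q m (n+1) (n+1) r j x) (n+1)]
        congr 1
        · apply Finset.sum_congr rfl
          intro r hr
          apply Finset.sum_congr rfl
          intro j hj
          have hrn : r ≤ n := by simpa using Nat.lt_succ_iff.mp (Finset.mem_range.mp hr)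
          show Tgen s q m (n+1) (n+1) (r+1) j x = _
          unfold Tgen
          rw [qBinom_pascal _ hrn, show n + 1 - (r+1) = n - r by omega]
          ring
        · apply Finset.sum_congr rfl
          intro j hj
          show Tgen s q m (n+1) (n+1) 0 j x = Tgen s q m n (n+1) 0 j x
          unfold Tgen
          rw [qBinom_zero, qBinom_zero]
      rw [h1]
      have h2 : (∑ r ∈ Finset.range (n+1), ∑ j ∈ Finset.range (m+1),
              (genStirling s q m j * q ^ (((r+1 : ℕ) : ℝ) * ((j : ℝ) * (1 - s) + s * (m : ℝ))) *
                ((q ^ s) ^ (n - r) * qBinom (q ^ s) n r) * genBellPoly s q (r+1) x * x ^ j *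
                (∏ i ∈ Finset.range (n - r),
                  qBracket q ((j : ℝ) * (1 - s) + s * (m : ℝ) + s * (i : ℝ)))
               + Tgen s q m n (n+1) (r+1) j x))
          = (∑ r ∈ Finset.range (n+1), ∑ j ∈ Finset.range (m+1),
              genStirling s q m j * q ^ (((r+1 : ℕ) : ℝ) * ((j : ℝ) * (1 - s) + s * (m : ℝ))) *
                ((q ^ s) ^ (n - r) * qBinom (q ^ s) n r) * genBellPoly s q (r+1) x * x ^ j *
                (∏ i ∈ Finset.range (n - r),
                  qBracket q ((j : ℝ) * (1 - s) + s * (m : ℝ) + s * (i : ℝ))))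
            + ∑ r ∈ Finset.range (n+1), ∑ j ∈ Finset.range (m+1), Tgen s q m n (n+1) (r+1) j x := by
        rw [← Finset.sum_add_distrib]
        apply Finset.sum_congr rfl
        intro r hr
        rw [← Finset.sum_add_distrib]
      rw [h2, add_assoc]
      have h3 : (∑ r ∈ Finset.range (n+1), ∑ j ∈ Finset.range (m+1), Tgen s q m n (n+1) (r+1) j x)
            + ∑ j ∈ Finset.range (m+1), Tgen s q m n (n+1) 0 j x
          = ∑ r ∈ Finset.range (n+1), ∑ j ∈ Finset.range (m+1), Tgen s q m n (n+1) r j x := by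
        rw [← Finset.sum_range_succ'
          (fun r => ∑ j ∈ Finset.range (m+1), Tgen s q m n (n+1) r j x) (n+1)]
        rw [Finset.sum_range_succ]
        have hz : ∑ j ∈ Finset.range (m+1), Tgen s q m n (n+1) (n+1) j x = 0 := by
          apply Finset.sum_eq_zero
          intro j hj
          unfold Tgen
          rw [qBinom_of_gt _ (by omega)]
          ring
        rw [hz, add_zero]
      rw [h3]
      -- transform the LHS
      rw [Finset.mul_sum, Finset.mul_sum]
      simp only [Finset.mul_sum]
      rw [← Finset.sum_sub_distrib]
      simp only [← Finset.sum_sub_distrib]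
      rw [Finset.sum_div]
      simp only [Finset.sum_div]
      rw [← Finset.sum_add_distrib]
      simp only [← Finset.sum_add_distrib]
      apply Finset.sum_congr rfl
      intro r hr
      apply Finset.sum_congr rfl
      intro j hj
      have hrn : r ≤ n := Nat.lt_succ_iff.mp (Finset.mem_range.mp hr)
      exact perterm q s x hq hq1 m n r j hrn
  rw [main n x]
  simp only [Tgen]
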